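/- For sequential Gibbs sampling on an n-variable distribution π satisfying Dobrushin's condition α < 1, the ω-sparse estimation time satisfies t_{SE(ω)}(ε) ≤ ⌈(n/(1−α))·log(ω/ε)⌉: for t at least this value and any initial distribution μ_0, ‖P^{(t)} μ_0 − π‖_{SV(ω)} ≤ ε. -/

import Mathlib

noncomputable def tvDist {Ω : Type*} [Fintype Ω] (μ ν : Ω → ℝ) : ℝ :=
  ⨆ A : Finset Ω, |∑ x ∈ A, μ x - ∑ x ∈ A, ν x|

def IsDist {Ω : Type*} [Fintype Ω] (μ : Ω → ℝ) : Prop :=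
  (∀ x, 0 ≤ μ x) ∧ ∑ x, μ x = 1

def SparseDependsOn {n : ℕ} {S : Type*} [Fintype S] [DecidableEq S]
    (A : Finset (Fin n → S)) (I : Finset (Fin n)) : Prop :=
  ∀ x y : Fin n → S, (∀ i ∈ I, x i = y i) → (x ∈ A ↔ y ∈ A)

noncomputable def svDist {n : ℕ} {S : Type*} [Fintype S] [DecidableEq S]
    (μ ν : (Fin n → S) → ℝ) (ω : ℕ) : ℝ :=
  ⨆ A : {A : Finset (Fin n → S) // ∃ I : Finset (Fin n), I.card ≤ ω ∧ SparseDependsOn A I},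
    |∑ x ∈ A.1, μ x - ∑ x ∈ A.1, ν x|

noncomputable def condDist {I S : Type*} [Fintype I] [Fintype S] [DecidableEq I]
    (π : (I → S) → ℝ) (i : I) (x : I → S) : S → ℝ :=
  fun s => π (Function.update x i s) / ∑ s' : S, π (Function.update x i s')

noncomputable def totalInfluence {I S : Type*} [Fintype I] [Fintype S] [DecidableEq I]
    (π : (I → S) → ℝ) : ℝ :=
  ⨆ i : I, ∑ j : I,
    ⨆ p : {p : (I → S) × (I → S) // ∀ k, k ≠ j → p.1 k = p.2 k},
      tvDist (condDist π i p.1.1) (condDist π i p.1.2)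

noncomputable def gibbsKernel {I S : Type*} [Fintype I] [Fintype S]
    [DecidableEq I] [DecidableEq S] (π : (I → S) → ℝ) (x y : I → S) : ℝ :=
  (Fintype.card I : ℝ)⁻¹ *
    ∑ i : I, if ∀ j, j ≠ i → y j = x j then condDist π i x (y i) else 0

noncomputable def evolve {Ω : Type*} [Fintype Ω] (K : Ω → Ω → ℝ) (μ : Ω → ℝ) : Ω → ℝ :=
  fun y => ∑ x, μ x * K x y

noncomputable def iter {Ω : Type*} [Fintype Ω] (K : Ω → Ω → ℝ) (t : ℕ) (μ : Ω → ℝ) : Ω → ℝ :=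
  (evolve K)^[t] μ

namespace SG

variable {n : ℕ} {S : Type*} [Fintype S] [DecidableEq S]

/-- basic: |μ(A) - ν(A)| ≤ tvDist μ ν -/
lemma abs_sub_le_tvDist {Ω : Type*} [Fintype Ω] (μ ν : Ω → ℝ) (A : Finset Ω) :
    |∑ x ∈ A, μ x - ∑ x ∈ A, ν x| ≤ tvDist μ ν := by
  exact le_ciSup (Set.Finite.bddAbove (Set.finite_range
    (fun A : Finset Ω => |∑ x ∈ A, μ x - ∑ x ∈ A, ν x|))) A

lemma tvDist_nonneg {Ω : Type*} [Fintype Ω] (μ ν : Ω → ℝ) : 0 ≤ tvDist μ ν := by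
  have := abs_sub_le_tvDist μ ν ∅
  simpa using this

lemma sum_abs_le_two_tvDist {Ω : Type*} [Fintype Ω] {μ ν : Ω → ℝ}
    (hμ : IsDist μ) (hν : IsDist ν) :
    ∑ x, |μ x - ν x| ≤ 2 * tvDist μ ν := by
  classical
  set A := Finset.univ.filter (fun x => ν x ≤ μ x) with hA
  have h1 : ∑ x ∈ A, (μ x - ν x) ≤ tvDist μ ν := by
    have := abs_sub_le_tvDist μ ν A
    rw [← Finset.sum_sub_distrib] at this
    exact (le_abs_self _).trans this
  have h2 : ∑ x ∈ Aᶜ, (ν x - μ x) ≤ tvDist μ ν := by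
    have := abs_sub_le_tvDist μ ν Aᶜ
    rw [← Finset.sum_sub_distrib] at this
    have := (neg_le_abs _).trans this
    rw [← Finset.sum_neg_distrib] at this
    simpa using this
  have hsplit : ∑ x, |μ x - ν x| = ∑ x ∈ A, (μ x - ν x) + ∑ x ∈ Aᶜ, (ν x - μ x) := by
    rw [← Finset.sum_add_sum_compl A (fun x => |μ x - ν x|)]
    congr 1
    · apply Finset.sum_congr rfl
      intro x hx
      rw [hA, Finset.mem_filter] at hx
      rw [abs_of_nonneg (by linarith [hx.2])]
    · apply Finset.sum_congr rfl
      intro x hx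
      rw [Finset.mem_compl, hA, Finset.mem_filter] at hx
      push_neg at hx
      have := hx (Finset.mem_univ x)
      rw [abs_of_nonpos (by linarith)]
      ring
  rw [hsplit]; linarith

/-- key averaging lemma -/
lemma core_bound {Ω : Type*} [Fintype Ω] [Nonempty Ω] (μ ν g : Ω → ℝ)
    (hμ : ∑ x, μ x = 1) (hν : ∑ x, ν x = 1) (b : ℝ)
    (hb : ∀ x y, |g x - g y| ≤ b) :
    |∑ x, μ x * g x - ∑ x, ν x * g x| ≤ (∑ x, |μ x - ν x|) / 2 * b := by
  classical
  obtain ⟨xM, -, hxM⟩ := Finset.exists_mem_eq_sup' (Finset.univ_nonempty (α := Ω)) g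
  obtain ⟨xm, -, hxm⟩ := Finset.exists_mem_eq_inf' (Finset.univ_nonempty (α := Ω)) g
  set M := Finset.univ.sup' Finset.univ_nonempty g
  set m := Finset.univ.inf' Finset.univ_nonempty g
  set c := (M + m) / 2 with hc
  have hMm : M - m ≤ b := by
    calc M - m ≤ |M - m| := le_abs_self _
    _ = |g xM - g xm| := by rw [hxM, hxm]
    _ ≤ b := hb xM xm
  have hgc : ∀ x, |g x - c| ≤ b / 2 := by
    intro x
    have h1 : g x ≤ M := Finset.le_sup' g (Finset.mem_univ x)
    have h2 : m ≤ g x := Finset.inf'_le g (Finset.mem_univ x)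
    rw [abs_le]; constructor <;> [skip; skip] <;> simp only [hc] <;> linarith
  have key : ∑ x, μ x * g x - ∑ x, ν x * g x = ∑ x, (μ x - ν x) * (g x - c) := by
    simp only [sub_mul, mul_sub, Finset.sum_sub_distrib]
    rw [← Finset.sum_mul, ← Finset.sum_mul, hμ, hν]
    ring
  rw [key]
  calc |∑ x, (μ x - ν x) * (g x - c)| ≤ ∑ x, |(μ x - ν x) * (g x - c)| :=
        Finset.abs_sum_le_sum_abs _ _
    _ ≤ ∑ x, |μ x - ν x| * (b / 2) := by
        apply Finset.sum_le_sum
        intro x _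
        rw [abs_mul]
        exact mul_le_mul_of_nonneg_left (hgc x) (abs_nonneg _)
    _ = (∑ x, |μ x - ν x|) / 2 * b := by rw [← Finset.sum_mul]; ring

lemma dist_pair_bound {Ω : Type*} [Fintype Ω] [Nonempty Ω] {μ ν : Ω → ℝ}
    (hμ : IsDist μ) (hν : IsDist ν) (g : Ω → ℝ) (b : ℝ)
    (hb : ∀ x y, |g x - g y| ≤ b) :
    |∑ x, μ x * g x - ∑ x, ν x * g x| ≤ tvDist μ ν * b := by
  have hb0 : 0 ≤ b := le_trans (abs_nonneg _) (hb (Classical.arbitrary Ω) (Classical.arbitrary Ω))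
  have h1 := core_bound μ ν g hμ.2 hν.2 b hb
  have h2 : (∑ x, |μ x - ν x|) / 2 ≤ tvDist μ ν := by
    have := sum_abs_le_two_tvDist hμ hν; linarith
  exact h1.trans (mul_le_mul_of_nonneg_right h2 hb0)

end SG
namespace SG

variable {n : ℕ} {S : Type*} [Fintype S] [DecidableEq S]

lemma update_eq_update {x y : Fin n → S} {i : Fin n} (h : ∀ k, k ≠ i → x k = y k)
    (s : S) : Function.update x i s = Function.update y i s := by
  funext k
  rcases eq_or_ne k i with rfl | hk
  · simp
  · simp [Function.update_of_ne hk, h k hk]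

lemma condDist_eq_of_agree (π : (Fin n → S) → ℝ) {i : Fin n} {x y : Fin n → S}
    (h : ∀ k, k ≠ i → x k = y k) : condDist π i x = condDist π i y := by
  funext s
  unfold condDist
  rw [update_eq_update h]
  congr 1
  apply Finset.sum_congr rfl
  intro s' _
  rw [update_eq_update h]

lemma condDist_isDist [Nonempty S] (π : (Fin n → S) → ℝ) (hpos : ∀ x, 0 < π x)
    (i : Fin n) (x : Fin n → S) : IsDist (condDist π i x) := by
  have hZ : 0 < ∑ s' : S, π (Function.update x i s') :=
    Finset.sum_pos (fun s _ => hpos _) Finset.univ_nonempty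
  constructor
  · intro s
    exact div_nonneg (hpos _).le hZ.le
  · unfold condDist
    rw [← Finset.sum_div, div_self hZ.ne']

/-- reindexing sum over configurations agreeing with `w` off `i` -/
lemma sum_ite_agree (w : Fin n → S) (i : Fin n) (F : (Fin n → S) → ℝ) :
    ∑ z, (if ∀ j, j ≠ i → z j = w j then F z else 0)
      = ∑ s : S, F (Function.update w i s) := by
  classical
  rw [← Finset.sum_filter]
  have himg : Finset.univ.filter (fun z : Fin n → S => ∀ j, j ≠ i → z j = w j)
      = Finset.univ.image (fun s => Function.update w i s) := by
    ext z
    simp only [Finset.mem_filter, Finset.mem_univ, true_and, Finset.mem_image]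
    constructor
    · intro h
      refine ⟨z i, ?_⟩
      funext k
      rcases eq_or_ne k i with rfl | hk
      · simp
      · simp [Function.update_of_ne hk, h k hk]
    · rintro ⟨s, rfl⟩ j hj
      simp [Function.update_of_ne hj]
  rw [himg, Finset.sum_image]
  intro s _ s' _ h
  have := congrArg (fun f => f i) h
  simpa using this

noncomputable def Tsite (π : (Fin n → S) → ℝ) (i : Fin n) (g : (Fin n → S) → ℝ)
    (x : Fin n → S) : ℝ :=
  ∑ s : S, condDist π i x s * g (Function.update x i s)

noncomputable def Top (π : (Fin n → S) → ℝ) (g : (Fin n → S) → ℝ) : (Fin n → S) → ℝ :=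
  fun x => ∑ y, gibbsKernel π x y * g y

lemma Top_eq (π : (Fin n → S) → ℝ) (g : (Fin n → S) → ℝ) (x : Fin n → S) :
    Top π g x = (n : ℝ)⁻¹ * ∑ i, Tsite π i g x := by
  calc Top π g x
      = (n : ℝ)⁻¹ * ∑ y, ∑ i,
          (if ∀ j, j ≠ i → y j = x j then condDist π i x (y i) else 0) * g y := by
        unfold Top gibbsKernel
        rw [Finset.mul_sum]
        apply Finset.sum_congr rfl
        intro y _
        rw [Fintype.card_fin, mul_assoc, Finset.sum_mul]
        apply congrArg
        apply Finset.sum_congr rfl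
        intro i _
        by_cases h : ∀ j, j ≠ i → y j = x j <;> simp [h]
    _ = (n : ℝ)⁻¹ * ∑ i, ∑ y,
          (if ∀ j, j ≠ i → y j = x j then condDist π i x (y i) else 0) * g y := by
        rw [Finset.sum_comm]
    _ = (n : ℝ)⁻¹ * ∑ i, Tsite π i g x := by
        congr 1
        apply Finset.sum_congr rfl
        intro i _
        simp only [ite_mul, zero_mul]
        rw [sum_ite_agree x i (fun z => condDist π i x (z i) * g z)]
        unfold Tsite
        apply Finset.sum_congr rfl
        intro s _
        simp

end SG
namespace SG

variable {n : ℕ} {S : Type*} [Fintype S] [DecidableEq S]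

instance pairOffNonempty {j : Fin n} [Nonempty (Fin n → S)] :
    Nonempty {p : (Fin n → S) × (Fin n → S) // ∀ k, k ≠ j → p.1 k = p.2 k} := by
  obtain ⟨x⟩ := (inferInstance : Nonempty (Fin n → S))
  exact ⟨⟨(x, x), fun _ _ => rfl⟩⟩

noncomputable def oscAt [Nonempty S] (j : Fin n) (g : (Fin n → S) → ℝ) : ℝ :=
  Finset.univ.sup' Finset.univ_nonempty
    (fun p : {p : (Fin n → S) × (Fin n → S) // ∀ k, k ≠ j → p.1 k = p.2 k} =>
      |g p.1.1 - g p.1.2|)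

lemma abs_sub_le_oscAt [Nonempty S] (j : Fin n) (g : (Fin n → S) → ℝ)
    {x y : Fin n → S} (h : ∀ k, k ≠ j → x k = y k) : |g x - g y| ≤ oscAt j g :=
  Finset.le_sup'
    (fun p : {p : (Fin n → S) × (Fin n → S) // ∀ k, k ≠ j → p.1 k = p.2 k} =>
      |g p.1.1 - g p.1.2|)
    (Finset.mem_univ ⟨(x, y), h⟩)

lemma oscAt_nonneg [Nonempty S] (j : Fin n) (g : (Fin n → S) → ℝ) : 0 ≤ oscAt j g := by
  obtain ⟨x⟩ := (inferInstance : Nonempty (Fin n → S))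
  have := abs_sub_le_oscAt j g (x := x) (y := x) (fun _ _ => rfl)
  simpa using this

lemma oscAt_le [Nonempty S] {j : Fin n} {g : (Fin n → S) → ℝ} {b : ℝ}
    (h : ∀ x y : Fin n → S, (∀ k, k ≠ j → x k = y k) → |g x - g y| ≤ b) :
    oscAt j g ≤ b :=
  Finset.sup'_le _ _ (fun p _ => h p.1.1 p.1.2 p.2)

noncomputable def Cinf (π : (Fin n → S) → ℝ) (i j : Fin n) : ℝ :=
  ⨆ p : {p : (Fin n → S) × (Fin n → S) // ∀ k, k ≠ j → p.1 k = p.2 k},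
    tvDist (condDist π i p.1.1) (condDist π i p.1.2)

lemma totalInfluence_eq (π : (Fin n → S) → ℝ) :
    totalInfluence π = ⨆ i, ∑ j, Cinf π i j := rfl

lemma tv_le_Cinf [Nonempty S] (π : (Fin n → S) → ℝ) (i j : Fin n)
    {x y : Fin n → S} (h : ∀ k, k ≠ j → x k = y k) :
    tvDist (condDist π i x) (condDist π i y) ≤ Cinf π i j :=
  le_ciSup (f := fun p : {p : (Fin n → S) × (Fin n → S) // ∀ k, k ≠ j → p.1 k = p.2 k} =>
      tvDist (condDist π i p.1.1) (condDist π i p.1.2))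
    (Set.Finite.bddAbove (Set.finite_range _)) ⟨(x, y), h⟩

lemma Cinf_nonneg [Nonempty S] (π : (Fin n → S) → ℝ) (i j : Fin n) : 0 ≤ Cinf π i j := by
  obtain ⟨x⟩ := (inferInstance : Nonempty (Fin n → S))
  exact (tvDist_nonneg _ _).trans (tv_le_Cinf π i j (x := x) (y := x) (fun _ _ => rfl))

lemma sum_Cinf_le (π : (Fin n → S) → ℝ) (i : Fin n) :
    ∑ j, Cinf π i j ≤ totalInfluence π := by
  rw [totalInfluence_eq]
  exact le_ciSup (f := fun i => ∑ j, Cinf π i j)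
    (Set.Finite.bddAbove (Set.finite_range _)) i

lemma totalInfluence_nonneg [Nonempty S] (π : (Fin n → S) → ℝ) (hn : 0 < n) :
    0 ≤ totalInfluence π := by
  refine le_trans ?_ (sum_Cinf_le π ⟨0, hn⟩)
  exact Finset.sum_nonneg (fun j _ => Cinf_nonneg π _ j)

lemma ite_irrel {P : Prop} (D E : Decidable P) (a b : ℝ) :
    @ite ℝ P D a b = @ite ℝ P E a b := by
  by_cases h : P
  · rw [if_pos h, if_pos h]
  · rw [if_neg h, if_neg h]

/-- reindexing, instance-polymorphic -/
lemma sum_ite_agreeD (w : Fin n → S) (i : Fin n) (F : (Fin n → S) → ℝ)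
    (D : ∀ z : Fin n → S, Decidable (∀ j, j ≠ i → z j = w j)) :
    ∑ z, @ite ℝ (∀ j, j ≠ i → z j = w j) (D z) (F z) 0
      = ∑ s : S, F (Function.update w i s) :=
  (Finset.sum_congr rfl (fun z _ => ite_irrel (D z) _ (F z) 0)).trans
    (sum_ite_agree w i F)

/-- reindexing, flipped condition, instance-polymorphic -/
lemma sum_ite_agreeD' (w : Fin n → S) (i : Fin n) (F : (Fin n → S) → ℝ)
    (D : ∀ z : Fin n → S, Decidable (∀ j, j ≠ i → w j = z j)) :
    ∑ z, @ite ℝ (∀ j, j ≠ i → w j = z j) (D z) (F z) 0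
      = ∑ s : S, F (Function.update w i s) := by
  have h1 : ∀ z : Fin n → S, @ite ℝ (∀ j, j ≠ i → w j = z j) (D z) (F z) 0
      = (if ∀ j, j ≠ i → z j = w j then F z else 0) := by
    intro z
    by_cases h : ∀ j, j ≠ i → z j = w j
    · rw [if_pos h, if_pos (fun j hj => (h j hj).symm)]
    · rw [if_neg h, if_neg (fun hc => h (fun j hj => (hc j hj).symm))]
  exact (Finset.sum_congr rfl (fun z _ => h1 z)).trans (sum_ite_agree w i F)

/-- stationarity -/
lemma evolve_gibbs [Nonempty S] (π : (Fin n → S) → ℝ) (hpos : ∀ x, 0 < π x)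
    (hn : 0 < n) : evolve (gibbsKernel π) π = π := by
  funext y
  have hZ : ∀ i : Fin n, 0 < ∑ s' : S, π (Function.update y i s') :=
    fun i => Finset.sum_pos (fun s _ => hpos _) Finset.univ_nonempty
  unfold evolve gibbsKernel
  simp only [Fintype.card_fin, Finset.mul_sum, mul_ite, mul_zero]
  rw [Finset.sum_comm]
  have hterm : ∀ i : Fin n,
      ∑ s : S, π (Function.update y i s) * ((n : ℝ)⁻¹ * condDist π i (Function.update y i s) (y i))
        = (n : ℝ)⁻¹ * π y := by
    intro i
    have hcd : ∀ s : S, condDist π i (Function.update y i s) (y i)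
        = π y / ∑ s' : S, π (Function.update y i s') := by
      intro s
      rw [condDist_eq_of_agree π (x := Function.update y i s) (y := y)
        (fun k hk => Function.update_of_ne hk _ _)]
      unfold condDist
      rw [Function.update_eq_self]
    calc ∑ s : S, π (Function.update y i s) * ((n : ℝ)⁻¹ * condDist π i (Function.update y i s) (y i))
        = ∑ s : S, π (Function.update y i s)
            * ((n : ℝ)⁻¹ * (π y / ∑ s' : S, π (Function.update y i s'))) := by
          apply Finset.sum_congr rfl
          intro s _
          rw [hcd s]
      _ = (∑ s : S, π (Function.update y i s))
            * ((n : ℝ)⁻¹ * (π y / ∑ s' : S, π (Function.update y i s'))) := by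
          rw [Finset.sum_mul]
      _ = (n : ℝ)⁻¹ * π y := by
          rw [mul_comm, mul_assoc, div_mul_cancel₀ _ (hZ i).ne']
  calc ∑ i : Fin n, ∑ x, (if ∀ j, j ≠ i → y j = x j
          then π x * ((n : ℝ)⁻¹ * condDist π i x (y i)) else 0)
      = ∑ i : Fin n, (n : ℝ)⁻¹ * π y := by
        apply Finset.sum_congr rfl
        intro i _
        exact (sum_ite_agreeD' y i (fun z => π z * ((n : ℝ)⁻¹ * condDist π i z (y i))) _).trans
          (hterm i)
    _ = π y := by
        rw [Finset.sum_const, Finset.card_univ, Fintype.card_fin, nsmul_eq_mul]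
        rw [← mul_assoc, mul_inv_cancel₀ (by exact_mod_cast hn.ne'), one_mul]

/-- duality -/
lemma sum_iter_mul (π : (Fin n → S) → ℝ) (t : ℕ) (μ g : (Fin n → S) → ℝ) :
    ∑ y, iter (gibbsKernel π) t μ y * g y = ∑ x, μ x * (Top π)^[t] g x := by
  induction t generalizing g with
  | zero => simp [iter]
  | succ t ih =>
    have h1 : iter (gibbsKernel π) (t + 1) μ = evolve (gibbsKernel π) (iter (gibbsKernel π) t μ) := by
      unfold iter
      rw [Function.iterate_succ_apply']
    rw [h1]
    have h2 : ∑ y, evolve (gibbsKernel π) (iter (gibbsKernel π) t μ) y * g y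
        = ∑ x, iter (gibbsKernel π) t μ x * Top π g x := by
      unfold evolve Top
      simp only [Finset.sum_mul, Finset.mul_sum]
      rw [Finset.sum_comm]
      apply Finset.sum_congr rfl
      intro x _
      apply Finset.sum_congr rfl
      intro y _
      ring
    rw [h2, ih (Top π g), Function.iterate_succ_apply]

end SG
namespace SG

variable {n : ℕ} {S : Type*} [Fintype S] [DecidableEq S]

lemma Tsite_agree (π : (Fin n → S) → ℝ) (g : (Fin n → S) → ℝ) {i : Fin n}
    {x y : Fin n → S} (h : ∀ k, k ≠ i → x k = y k) : Tsite π i g x = Tsite π i g y := by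
  unfold Tsite
  rw [condDist_eq_of_agree π h]
  apply Finset.sum_congr rfl
  intro s _
  rw [update_eq_update h]

lemma Tsite_osc [Nonempty S] (π : (Fin n → S) → ℝ) (hpos : ∀ x, 0 < π x)
    (g : (Fin n → S) → ℝ) {i j : Fin n} (hij : i ≠ j) {x y : Fin n → S}
    (hxy : ∀ k, k ≠ j → x k = y k) :
    |Tsite π i g x - Tsite π i g y| ≤ oscAt j g + Cinf π i j * oscAt i g := by
  have hdx := condDist_isDist π hpos i x
  have hdy := condDist_isDist π hpos i y
  set μ := condDist π i x with hμ
  set ν := condDist π i y with hν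
  have split : Tsite π i g x - Tsite π i g y
      = (∑ s, μ s * (g (Function.update x i s) - g (Function.update y i s)))
        + (∑ s, μ s * g (Function.update y i s) - ∑ s, ν s * g (Function.update y i s)) := by
    unfold Tsite
    simp only [mul_sub, Finset.sum_sub_distrib]
    ring
  rw [split]
  have hA : |∑ s, μ s * (g (Function.update x i s) - g (Function.update y i s))| ≤ oscAt j g := by
    calc |∑ s, μ s * (g (Function.update x i s) - g (Function.update y i s))|
        ≤ ∑ s, |μ s * (g (Function.update x i s) - g (Function.update y i s))| :=
          Finset.abs_sum_le_sum_abs _ _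
      _ ≤ ∑ s, μ s * oscAt j g := by
          apply Finset.sum_le_sum
          intro s _
          rw [abs_mul, abs_of_nonneg (hdx.1 s)]
          apply mul_le_mul_of_nonneg_left _ (hdx.1 s)
          apply abs_sub_le_oscAt j g
          intro k hk
          rcases eq_or_ne k i with rfl | hki
          · simp
          · rw [Function.update_of_ne hki, Function.update_of_ne hki]
            exact hxy k hk
      _ = oscAt j g := by rw [← Finset.sum_mul, hdx.2, one_mul]
  have hB : |∑ s, μ s * g (Function.update y i s) - ∑ s, ν s * g (Function.update y i s)|
      ≤ Cinf π i j * oscAt i g := by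
    have h1 := dist_pair_bound hdx hdy (fun s => g (Function.update y i s)) (oscAt i g) ?_
    · refine h1.trans ?_
      exact mul_le_mul_of_nonneg_right (tv_le_Cinf π i j hxy) (oscAt_nonneg i g)
    · intro s s'
      apply abs_sub_le_oscAt i g
      intro k hk
      rw [Function.update_of_ne hk, Function.update_of_ne hk]
  calc |_ + _| ≤ _ + _ := abs_add_le _ _
    _ ≤ oscAt j g + Cinf π i j * oscAt i g := add_le_add hA hB

lemma sum_osc_Top [Nonempty S] (π : (Fin n → S) → ℝ) (hpos : ∀ x, 0 < π x)
    (hn : 0 < n) (g : (Fin n → S) → ℝ) :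
    ∑ j, oscAt j (Top π g)
      ≤ (1 - (1 - totalInfluence π) / n) * ∑ j, oscAt j g := by
  set α := totalInfluence π with hα
  have hn0 : (0:ℝ) < n := by exact_mod_cast hn
  have stepA : ∀ j, oscAt j (Top π g)
      ≤ (n : ℝ)⁻¹ * ∑ i, (if i = j then 0 else oscAt j g + Cinf π i j * oscAt i g) := by
    intro j
    apply oscAt_le
    intro x y hxy
    have hTop : Top π g x - Top π g y
        = (n : ℝ)⁻¹ * ∑ i, (Tsite π i g x - Tsite π i g y) := by
      rw [Top_eq, Top_eq, ← mul_sub, ← Finset.sum_sub_distrib]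
    rw [hTop, abs_mul, abs_of_nonneg (inv_nonneg.2 hn0.le)]
    apply mul_le_mul_of_nonneg_left _ (inv_nonneg.2 hn0.le)
    calc |∑ i, (Tsite π i g x - Tsite π i g y)|
        ≤ ∑ i, |Tsite π i g x - Tsite π i g y| := Finset.abs_sum_le_sum_abs _ _
      _ ≤ ∑ i, (if i = j then 0 else oscAt j g + Cinf π i j * oscAt i g) := by
          apply Finset.sum_le_sum
          intro i _
          by_cases hi : i = j
          · subst hi
            rw [if_pos rfl, Tsite_agree π g hxy, sub_self, abs_zero]
          · rw [if_neg hi]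
            exact Tsite_osc π hpos g hi hxy
  have key1 : ∀ j : Fin n, ∑ i, (if i = j then 0 else oscAt j g + Cinf π i j * oscAt i g)
      ≤ ((n : ℝ) - 1) * oscAt j g + ∑ i, Cinf π i j * oscAt i g := by
    intro j
    have h1 : ∀ i : Fin n, (if i = j then 0 else oscAt j g + Cinf π i j * oscAt i g)
        ≤ (if i = j then 0 else oscAt j g) + Cinf π i j * oscAt i g := by
      intro i
      by_cases hi : i = j
      · simp only [if_pos hi]
        rw [zero_add]
        exact mul_nonneg (Cinf_nonneg π i j) (oscAt_nonneg i g)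
      · simp only [if_neg hi]
        exact le_rfl
    calc ∑ i, (if i = j then 0 else oscAt j g + Cinf π i j * oscAt i g)
        ≤ ∑ i, ((if i = j then 0 else oscAt j g) + Cinf π i j * oscAt i g) :=
          Finset.sum_le_sum (fun i _ => h1 i)
      _ = (∑ i, (if i = j then 0 else oscAt j g)) + ∑ i, Cinf π i j * oscAt i g :=
          Finset.sum_add_distrib
      _ = ((n : ℝ) - 1) * oscAt j g + ∑ i, Cinf π i j * oscAt i g := by
          congr 1
          have h2 : ∀ i : Fin n, (if i = j then 0 else oscAt j g)
              = oscAt j g - (if i = j then oscAt j g else 0) := by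
            intro i
            by_cases hi : i = j <;> simp [hi]
          rw [Finset.sum_congr rfl (fun i _ => h2 i), Finset.sum_sub_distrib,
            Finset.sum_const, Finset.sum_ite_eq' Finset.univ j (fun _ => oscAt j g),
            if_pos (Finset.mem_univ j), Finset.card_univ, Fintype.card_fin, nsmul_eq_mul]
          ring
  have key2 : ∑ j, ∑ i, Cinf π i j * oscAt i g ≤ α * ∑ i, oscAt i g := by
    rw [Finset.sum_comm]
    calc ∑ i, ∑ j, Cinf π i j * oscAt i g
        = ∑ i, (∑ j, Cinf π i j) * oscAt i g := by
          apply Finset.sum_congr rfl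
          intro i _
          rw [Finset.sum_mul]
      _ ≤ ∑ i, α * oscAt i g := by
          apply Finset.sum_le_sum
          intro i _
          exact mul_le_mul_of_nonneg_right (sum_Cinf_le π i) (oscAt_nonneg i g)
      _ = α * ∑ i, oscAt i g := by rw [Finset.mul_sum]
  calc ∑ j, oscAt j (Top π g)
      ≤ ∑ j, (n : ℝ)⁻¹ * ∑ i, (if i = j then 0 else oscAt j g + Cinf π i j * oscAt i g) :=
        Finset.sum_le_sum (fun j _ => stepA j)
    _ = (n : ℝ)⁻¹ * ∑ j, ∑ i, (if i = j then 0 else oscAt j g + Cinf π i j * oscAt i g) := by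
        rw [Finset.mul_sum]
    _ ≤ (n : ℝ)⁻¹ * (((n : ℝ) - 1) * ∑ j, oscAt j g + α * ∑ j, oscAt j g) := by
        apply mul_le_mul_of_nonneg_left _ (inv_nonneg.2 hn0.le)
        calc ∑ j, ∑ i, (if i = j then 0 else oscAt j g + Cinf π i j * oscAt i g)
            ≤ ∑ j, (((n : ℝ) - 1) * oscAt j g + ∑ i, Cinf π i j * oscAt i g) :=
              Finset.sum_le_sum (fun j _ => key1 j)
          _ = ((n : ℝ) - 1) * ∑ j, oscAt j g + ∑ j, ∑ i, Cinf π i j * oscAt i g := by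
              rw [Finset.sum_add_distrib, Finset.mul_sum]
          _ ≤ ((n : ℝ) - 1) * ∑ j, oscAt j g + α * ∑ j, oscAt j g := by
              exact add_le_add (le_refl _) key2
    _ = (1 - (1 - α) / n) * ∑ j, oscAt j g := by
        field_simp
        ring

lemma abs_sub_le_sum_oscAt [Nonempty S] (g : (Fin n → S) → ℝ) (x y : Fin n → S) :
    |g x - g y| ≤ ∑ j, oscAt j g := by
  classical
  have aux : ∀ J : Finset (Fin n), ∀ x y : Fin n → S,
      (∀ k, k ∉ J → x k = y k) → |g x - g y| ≤ ∑ j ∈ J, oscAt j g := by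
    intro J
    induction J using Finset.induction_on with
    | empty =>
      intro x y h
      have : x = y := funext (fun k => h k (Finset.notMem_empty k))
      simp [this]
    | @insert j J hj ih =>
      intro x y hxy
      set x' := Function.update x j (y j) with hx'
      have h1 : |g x - g x'| ≤ oscAt j g := by
        apply abs_sub_le_oscAt j g
        intro k hk
        rw [hx', Function.update_of_ne hk]
      have h2 : |g x' - g y| ≤ ∑ i ∈ J, oscAt i g := by
        apply ih
        intro k hk
        rcases eq_or_ne k j with rfl | hkj
        · rw [hx', Function.update_self]
        · rw [hx', Function.update_of_ne hkj]
          exact hxy k (by simp [hkj, hk])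
      calc |g x - g y| ≤ |g x - g x'| + |g x' - g y| := abs_sub_le _ _ _
        _ ≤ oscAt j g + ∑ i ∈ J, oscAt i g := add_le_add h1 h2
        _ = ∑ i ∈ insert j J, oscAt i g := (Finset.sum_insert (f := fun i => oscAt i g) hj).symm
  exact aux Finset.univ x y (fun k hk => absurd (Finset.mem_univ k) hk)

lemma dist_le_sum_osc [Nonempty S] {μ ν : (Fin n → S) → ℝ}
    (hμ : IsDist μ) (hν : IsDist ν) (g : (Fin n → S) → ℝ) :
    |∑ x, μ x * g x - ∑ x, ν x * g x| ≤ ∑ j, oscAt j g := by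
  have h := core_bound μ ν g hμ.2 hν.2 _ (abs_sub_le_sum_oscAt g)
  refine h.trans ?_
  have h2 : ∑ x, |μ x - ν x| ≤ 2 := by
    calc ∑ x, |μ x - ν x| ≤ ∑ x, (μ x + ν x) := by
          apply Finset.sum_le_sum
          intro x _
          calc |μ x - ν x| ≤ |μ x| + |ν x| := abs_sub _ _
            _ = μ x + ν x := by rw [abs_of_nonneg (hμ.1 x), abs_of_nonneg (hν.1 x)]
      _ = 2 := by rw [Finset.sum_add_distrib, hμ.2, hν.2]; norm_num
  have hΔ : 0 ≤ ∑ j, oscAt j g := Finset.sum_nonneg (fun j _ => oscAt_nonneg j g)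
  calc (∑ x, |μ x - ν x|) / 2 * ∑ j, oscAt j g ≤ 1 * ∑ j, oscAt j g := by
        apply mul_le_mul_of_nonneg_right _ hΔ
        linarith
    _ = ∑ j, oscAt j g := one_mul _

end SG

/-- for sequential Gibbs sampling on an `n`-variable distribution `π`
satisfying Dobrushin's condition `α < 1`, the `ω`-sparse estimation time satisfies
`t_{SE(ω)}(ε) ≤ ⌈(n/(1−α))·log(ω/ε)⌉`: for `t` at least this value and any initial
distribution `μ₀`, `‖P^{(t)} μ₀ − π‖_{SV(ω)} ≤ ε`. -/
theorem gibbs_sparse_estimation_time_dobrushin {n : ℕ} (hn : 0 < n)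
    {S : Type*} [Fintype S] [DecidableEq S]
    (π : (Fin n → S) → ℝ) (hπ : IsDist π) (hpos : ∀ x, 0 < π x)
    (hα : totalInfluence π < 1)
    (ω : ℕ) (ε : ℝ) (hε : 0 < ε) (t : ℕ)
    (ht : (n : ℝ) / (1 - totalInfluence π) * Real.log (ω / ε) ≤ t)
    (μ0 : (Fin n → S) → ℝ) (hμ0 : IsDist μ0) :
    svDist (iter (gibbsKernel π) t μ0) π ω ≤ ε := by
  classical
  have hS : Nonempty S := by
    by_contra h
    rw [not_nonempty_iff] at h
    have hempty : IsEmpty (Fin n → S) := ⟨fun f => h.false (f ⟨0, hn⟩)⟩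
    have h2 := hπ.2
    rw [Finset.univ_eq_empty, Finset.sum_empty] at h2
    norm_num at h2
  set α := totalInfluence π with hα_def
  have hα0 : 0 ≤ α := SG.totalInfluence_nonneg π hn
  have hn0 : (0:ℝ) < n := by exact_mod_cast hn
  set r : ℝ := 1 - (1 - α) / n with hr_def
  have hr0 : 0 ≤ r := by
    have h1 : (1 - α) / (n:ℝ) ≤ 1 := by
      rw [div_le_one hn0]
      have : (1:ℝ) ≤ n := by exact_mod_cast hn
      linarith
    rw [hr_def]; linarith
  have hr1 : r < 1 := by
    have : 0 < (1 - α) / (n:ℝ) := div_pos (by linarith) hn0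
    rw [hr_def]; linarith
  -- contraction of total oscillation
  have contract : ∀ (g : (Fin n → S) → ℝ) (k : ℕ),
      ∑ j, SG.oscAt j ((SG.Top π)^[k] g) ≤ r ^ k * ∑ j, SG.oscAt j g := by
    intro g k
    induction k with
    | zero => simp
    | succ k ih =>
      calc ∑ j, SG.oscAt j ((SG.Top π)^[k + 1] g)
          = ∑ j, SG.oscAt j (SG.Top π ((SG.Top π)^[k] g)) := by
            rw [Function.iterate_succ_apply']
        _ ≤ r * ∑ j, SG.oscAt j ((SG.Top π)^[k] g) := SG.sum_osc_Top π hpos hn _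
        _ ≤ r * (r ^ k * ∑ j, SG.oscAt j g) := mul_le_mul_of_nonneg_left ih hr0
        _ = r ^ (k + 1) * ∑ j, SG.oscAt j g := by ring
  haveI hne : Nonempty {A : Finset (Fin n → S) //
      ∃ I : Finset (Fin n), I.card ≤ ω ∧ SparseDependsOn A I} :=
    ⟨⟨∅, ∅, by simp, fun x y _ => by simp⟩⟩
  unfold svDist
  apply ciSup_le
  rintro ⟨A, I, hI, hdep⟩
  set f : (Fin n → S) → ℝ := fun x => if x ∈ A then 1 else 0 with hf
  have hrepr : ∀ μ : (Fin n → S) → ℝ, ∑ x ∈ A, μ x = ∑ x, μ x * f x := by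
    intro μ
    simp only [hf, mul_ite, mul_one, mul_zero]
    rw [Finset.sum_ite_mem, Finset.univ_inter]
  set g : (Fin n → S) → ℝ := (SG.Top π)^[t] f with hg
  have hdual : ∑ x ∈ A, iter (gibbsKernel π) t μ0 x = ∑ x, μ0 x * g x := by
    rw [hrepr]
    exact SG.sum_iter_mul π t μ0 f
  have hstat : ∑ x ∈ A, π x = ∑ x, π x * g x := by
    rw [hrepr]
    have hfix : iter (gibbsKernel π) t π = π :=
      Function.iterate_fixed (SG.evolve_gibbs π hpos hn) t
    have h3 := SG.sum_iter_mul π t π f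
    rw [hfix] at h3
    exact h3
  have hΔf : ∑ j, SG.oscAt j f ≤ (ω : ℝ) := by
    calc ∑ j, SG.oscAt j f ≤ ∑ j, (if j ∈ I then (1:ℝ) else 0) := by
          apply Finset.sum_le_sum
          intro j _
          by_cases hj : j ∈ I
          · rw [if_pos hj]
            apply SG.oscAt_le
            intro x y _
            simp only [hf]
            by_cases hx : x ∈ A <;> by_cases hy : y ∈ A <;> simp [hx, hy]
          · rw [if_neg hj]
            apply SG.oscAt_le
            intro x y hxy
            have hiff : x ∈ A ↔ y ∈ A :=
              hdep x y (fun i hi => hxy i (fun hij => hj (hij ▸ hi)))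
            have : (if x ∈ A then (1:ℝ) else 0) = (if y ∈ A then (1:ℝ) else 0) := by
              by_cases hx : x ∈ A
              · rw [if_pos hx, if_pos (hiff.mp hx)]
              · rw [if_neg hx, if_neg (fun hy => hx (hiff.mpr hy))]
            simp only [hf]
            rw [this, sub_self, abs_zero]
      _ = (I.card : ℝ) := by
          rw [Finset.sum_ite_mem, Finset.univ_inter, Finset.sum_const, nsmul_eq_mul, mul_one]
      _ ≤ (ω : ℝ) := by exact_mod_cast hI
  have hfinal : r ^ t * (ω : ℝ) ≤ ε := by
    by_cases hω : (ω : ℝ) ≤ ε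
    · have h4 : r ^ t ≤ 1 := pow_le_one₀ hr0 hr1.le
      calc r ^ t * (ω : ℝ) ≤ 1 * (ω : ℝ) :=
            mul_le_mul_of_nonneg_right h4 (Nat.cast_nonneg ω)
        _ ≤ ε := by rw [one_mul]; exact hω
    · push_neg at hω
      have hω0 : (0:ℝ) < ω := lt_trans hε hω
      have h1α : (0:ℝ) < 1 - α := by linarith
      have hL : Real.log ((ω:ℝ) / ε) ≤ (1 - α) / n * t := by
        have h5 : (1 - α) / (n:ℝ) * ((n:ℝ) / (1 - α) * Real.log ((ω:ℝ) / ε))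
            = Real.log ((ω:ℝ) / ε) := by
          field_simp
        calc Real.log ((ω:ℝ) / ε)
            = (1 - α) / (n:ℝ) * ((n:ℝ) / (1 - α) * Real.log ((ω:ℝ) / ε)) := h5.symm
          _ ≤ (1 - α) / (n:ℝ) * t :=
              mul_le_mul_of_nonneg_left ht (by positivity)
      have hexp : r ≤ Real.exp (-((1 - α) / n)) := by
        have h6 := Real.add_one_le_exp (-((1 - α) / (n:ℝ)))
        rw [hr_def]; linarith
      have hrt : r ^ t ≤ Real.exp (-((1 - α) / n * t)) := by
        calc r ^ t ≤ (Real.exp (-((1 - α) / n))) ^ t := pow_le_pow_left₀ hr0 hexp t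
          _ = Real.exp (-((1 - α) / n * t)) := by
              rw [← Real.exp_nat_mul]
              congr 1
              ring
      have hle : Real.exp (-((1 - α) / n * t)) ≤ ε / (ω : ℝ) := by
        have h7 : -((1 - α) / n * t) ≤ Real.log (ε / (ω : ℝ)) := by
          rw [show ε / (ω:ℝ) = ((ω:ℝ) / ε)⁻¹ by rw [inv_div], Real.log_inv]
          linarith
        calc Real.exp (-((1 - α) / n * t)) ≤ Real.exp (Real.log (ε / (ω : ℝ))) :=
              Real.exp_le_exp.mpr h7
          _ = ε / (ω : ℝ) := Real.exp_log (div_pos hε hω0)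
      calc r ^ t * (ω : ℝ) ≤ ε / (ω : ℝ) * (ω : ℝ) :=
            mul_le_mul_of_nonneg_right (hrt.trans hle) hω0.le
        _ = ε := div_mul_cancel₀ _ hω0.ne'
  calc |∑ x ∈ A, iter (gibbsKernel π) t μ0 x - ∑ x ∈ A, π x|
      = |∑ x, μ0 x * g x - ∑ x, π x * g x| := by rw [hdual, hstat]
    _ ≤ ∑ j, SG.oscAt j g := SG.dist_le_sum_osc hμ0 hπ g
    _ ≤ r ^ t * ∑ j, SG.oscAt j f := contract f t
    _ ≤ r ^ t * (ω : ℝ) := mul_le_mul_of_nonneg_left hΔf (pow_nonneg hr0 t)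
    _ ≤ ε := hfinal
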